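/- Let {a_ξ : ξ < ω_1} be a tower on ω (a_ξ ⊂_* a_η for ξ < η). Then there exist orderings <_n on ω_1 for n < ω such that: (1) each (ω_1, <_n) is a tree ordering of height at most ω; (2) <_m ⊆ <_n for m < n; (3) for all α < β < ω_1 there is n with α <_n β; (4) if α <_n β then a_α ∖ n ⊆ a_β; (5) if α is a limit ordinal and α <_n β then α+1 ≤_n β. -/

import Mathlib

/-- The index set `ω₁`: ordinals below `ω₁ = (ℵ₁).ord`. -/
def Omega1 : Type 1 := ↥(Set.Iio (Cardinal.aleph 1).ord)

noncomputable instance : LinearOrder Omega1 :=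
  inferInstanceAs (LinearOrder ↥(Set.Iio (Cardinal.aleph 1).ord))

/-!
Statement 11: Let `{a_ξ : ξ < ω₁}` be a tower on `ω` (`a_ξ ⊂_* a_η` for `ξ < η`).
Then there exist (strict) orderings `<_n` on `ω₁`, for `n < ω`, such that:
(1) each `(ω₁, <_n)` is a tree ordering of height at most `ω` (it is irreflexive and
    transitive, and the set of `<_n`-predecessors of any point is finite and linearly
    ordered by `<_n`);
(2) if `α <_m β` and `m < n` then `α <_n β`;
(3) if `α < β < ω₁` then there is `n` with `α <_n β`;
(4) if `α <_n β` then `a_α ∖ n ⊆ a_β`;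
(5) if `α` is a limit ordinal and `α <_n β` then `α + 1 ≤_n β`.
-/
namespace TreeAux

instance : WellFoundedLT Omega1 :=
  inferInstanceAs (WellFoundedLT (Set.Iio (Cardinal.aleph 1).ord))

lemma omega1_isLimit : Order.IsSuccLimit ((Cardinal.aleph 1).ord) :=
  Cardinal.isSuccLimit_ord (Cardinal.aleph0_le_aleph 1)

lemma ltO {x y : Omega1} : x < y ↔ x.1 < y.1 := Subtype.coe_lt_coe.symm

lemma extO {x y : Omega1} (h : x.1 = y.1) : x = y := Subtype.ext h

noncomputable def succO (β : Omega1) : Omega1 :=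
  ⟨β.1 + 1, by
    have h := β.2
    simp only [Set.mem_Iio] at h ⊢
    rw [Ordinal.add_one_eq_succ]
    exact omega1_isLimit.succ_lt h⟩

lemma succO_val (β : Omega1) : (succO β).1 = β.1 + 1 := rfl

lemma lt_succO (β : Omega1) : β < succO β := by
  rw [ltO, succO_val, Ordinal.add_one_eq_succ]; exact Order.lt_succ _

lemma countable_Iio (β : Omega1) : (Set.Iio β).Countable := by
  have h1 : (β.1).card ≤ Cardinal.aleph 0 := by
    have h := β.2
    simp only [Set.mem_Iio, Cardinal.lt_ord] at h
    have : Cardinal.aleph 1 = Order.succ (Cardinal.aleph 0) := by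
      rw [← Cardinal.aleph_succ]; norm_num
    exact Order.lt_succ_iff.mp (lt_of_lt_of_eq h this)
  rw [← Cardinal.le_aleph0_iff_set_countable]
  have hinj : Function.Injective (fun γ : Set.Iio β => (⟨γ.1.1, ltO.mp γ.2⟩ : Set.Iio β.1)) := by
    intro x y hxy
    apply Subtype.ext; apply extO
    simpa using congrArg Subtype.val hxy
  calc Cardinal.mk (Set.Iio β) ≤ Cardinal.mk (Set.Iio β.1) := Cardinal.mk_le_of_injective hinj
    _ = Cardinal.lift.{1} (β.1).card := Ordinal.mk_Iio_ordinal β.1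
    _ ≤ Cardinal.lift.{1} (Cardinal.aleph 0) := by exact_mod_cast Cardinal.lift_le.mpr h1
    _ = Cardinal.aleph0 := by simp [Cardinal.aleph_zero]


section
attribute [local instance] Classical.propDecidable
variable (a : Omega1 → Set ℕ)

/-- A bound `m` such that `a α \ m ⊆ a β`, when it exists. -/
noncomputable def bnd (α β : Omega1) : ℕ :=
  if h : ∃ m : ℕ, ∀ k ∈ a α, m ≤ k → k ∈ a β then h.choose else 0

lemma exists_bound
    (htower : ∀ ξ η : Omega1, ξ < η → (a ξ \ a η).Finite ∧ (a η \ a ξ).Infinite)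
    {α β : Omega1} (h : α < β) :
    ∃ m : ℕ, ∀ k ∈ a α, m ≤ k → k ∈ a β := by
  obtain ⟨hfin, -⟩ := htower α β h
  obtain ⟨m, hm⟩ := hfin.bddAbove
  refine ⟨m + 1, fun k hk hmk => ?_⟩
  by_contra hkb
  have h2 : k ≤ m := hm ⟨hk, hkb⟩
  omega

lemma bnd_spec
    (htower : ∀ ξ η : Omega1, ξ < η → (a ξ \ a η).Finite ∧ (a η \ a ξ).Infinite)
    {α β : Omega1} (h : α < β) :
    ∀ k ∈ a α, bnd a α β ≤ k → k ∈ a β := by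
  have hex := exists_bound a htower h
  unfold bnd
  rw [dif_pos hex]
  exact hex.choose_spec

/-- Elements of `Omega1` below `β` that are successor ordinals. -/
def SubB (β : Omega1) : Type 1 := {γ : Omega1 // γ < β ∧ ∃ δ : Omega1, γ.1 = δ.1 + 1}

lemma next_exists {β : Omega1} (hβ : Order.IsSuccLimit (β.1)) {x y : Omega1}
    (hx : x < β) (hy : y < β) : ∃ q : SubB β, x < q.1 ∧ y < q.1 := by
  set δ := max x y with hδ
  have hδβ : δ < β := max_lt hx hy
  refine ⟨⟨succO δ, ?_, δ, rfl⟩, ?_, ?_⟩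
  · rw [ltO, succO_val, Ordinal.add_one_eq_succ]
    exact hβ.succ_lt (ltO.mp hδβ)
  · exact lt_of_le_of_lt (le_max_left x y) (lt_succO δ)
  · exact lt_of_le_of_lt (le_max_right x y) (lt_succO δ)

lemma zero_mem : (0 : Ordinal) ∈ Set.Iio (Cardinal.aleph 1).ord :=
  Set.mem_Iio.mpr omega1_isLimit.pos

lemma one_mem : (1 : Ordinal) ∈ Set.Iio (Cardinal.aleph 1).ord :=
  Set.mem_Iio.mpr (Ordinal.one_lt_of_isSuccLimit omega1_isLimit)

noncomputable def oneO : Omega1 := ⟨1, one_mem⟩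

lemma oneO_succ : ∃ δ : Omega1, (oneO).1 = δ.1 + 1 := ⟨⟨0, zero_mem⟩, (zero_add 1).symm⟩

lemma oneO_lt {β : Omega1} (hβ : Order.IsSuccLimit (β.1)) : oneO < β := ltO.mpr (Ordinal.one_lt_of_isSuccLimit hβ)

lemma exists_enum (β : Omega1) (hβ : Order.IsSuccLimit (β.1)) :
    ∃ s : ℕ → Omega1, (∀ k, s k < β) ∧ (∀ γ, γ < β → ∃ k, s k = γ) := by
  obtain ⟨f, hf⟩ := (countable_Iio β).exists_eq_range ⟨oneO, oneO_lt hβ⟩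
  refine ⟨f, fun k => ?_, fun γ hγ => ?_⟩
  · have : f k ∈ Set.Iio β := hf ▸ Set.mem_range_self k
    exact this
  · have : γ ∈ Set.range f := hf ▸ hγ
    obtain ⟨k, hk⟩ := this
    exact ⟨k, hk⟩

/-- The chain of points and levels used at a limit stage. -/
noncomputable def chain (β : Omega1) (hβ : Order.IsSuccLimit (β.1))
    (F : ∀ γ : Omega1, γ < β → ℕ → Set Omega1)
    (s : ℕ → Omega1) (hs : ∀ k, s k < β) : ℕ → SubB β × ℕ
  | 0 => (⟨oneO, oneO_lt hβ, oneO_succ⟩, bnd a oneO β)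
  | k + 1 =>
    let p := chain β hβ F s hs k
    let q := (next_exists hβ p.1.2.1 (hs k)).choose
    let n' := if h : ∃ m, p.2 < m ∧ p.1.1 ∈ F q.1 q.2.1 m ∧
        (∀ j ∈ a q.1, m ≤ j → j ∈ a β) then h.choose else p.2 + 1
    (q, n')

/-- One step of the recursion. -/
noncomputable def step (β : Omega1)
    (F : ∀ γ : Omega1, γ < β → ℕ → Set Omega1) : ℕ → Set Omega1 :=
  if hsucc : ∃ α : Omega1, α < β ∧ β.1 = α.1 + 1 then
    fun n => if bnd a hsucc.choose β ≤ n then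
      F hsucc.choose hsucc.choose_spec.1 n ∪ {hsucc.choose} else ∅
  else if hβ : Order.IsSuccLimit (β.1) then
    let s := (exists_enum β hβ).choose
    let c := chain a β hβ F s (exists_enum β hβ).choose_spec.1
    fun n => if (c 0).2 ≤ n then
      F (c (Nat.findGreatest (fun k => (c k).2 ≤ n) n)).1.1
        (c (Nat.findGreatest (fun k => (c k).2 ≤ n) n)).1.2.1 n ∪
        {(c (Nat.findGreatest (fun k => (c k).2 ≤ n) n)).1.1}
    else ∅
  else fun _ => ∅

/-- The tree system. -/
noncomputable def FF : Omega1 → ℕ → Set Omega1 :=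
  (wellFounded_lt (α := Omega1)).fix (step a)

lemma FF_eq (β : Omega1) : FF a β = step a β (fun γ _ => FF a γ) :=
  (wellFounded_lt (α := Omega1)).fix_eq (step a) β


/-- The limit-stage chain specialised to `FF`. -/
noncomputable def cc (β : Omega1) (hβ : Order.IsSuccLimit (β.1)) : ℕ → SubB β × ℕ :=
  chain a β hβ (fun γ _ => FF a γ) (exists_enum β hβ).choose
    (exists_enum β hβ).choose_spec.1

/-- The inductive invariant. -/
structure Inv (β : Omega1) : Prop where
  lt : ∀ n γ, γ ∈ FF a β n → γ < β
  mono : ∀ {m n : ℕ}, m ≤ n → FF a β m ⊆ FF a β n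
  fin : ∀ n, (FF a β n).Finite
  cover : ∀ γ, γ < β → ∃ n, γ ∈ FF a β n
  coh : ∀ n α, α ∈ FF a β n → FF a α n = FF a β n ∩ Set.Iio α
  abd : ∀ n α, α ∈ FF a β n → ∀ k ∈ a α, n ≤ k → k ∈ a β
  lim : ∀ n α, α ∈ FF a β n → Order.IsSuccLimit (α.1) → succO α = β ∨ succO α ∈ FF a β n

section Helpers
variable {a} {A β : Omega1} {n : ℕ}

lemma helper_lt (hA : A < β) (IA : Inv a A) (hEq : FF a β n = FF a A n ∪ {A}) :
    ∀ x, x ∈ FF a β n → x < β := by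
  intro x hx
  rw [hEq] at hx
  rcases hx with hx | hx
  · exact lt_trans (IA.lt n x hx) hA
  · rw [Set.mem_singleton_iff] at hx; rw [hx]; exact hA

lemma helper_coh (IA : Inv a A) (hEq : FF a β n = FF a A n ∪ {A}) :
    ∀ x, x ∈ FF a β n → FF a x n = FF a β n ∩ Set.Iio x := by
  intro x hx
  rw [hEq] at hx ⊢
  rcases hx with hx | hx
  · rw [IA.coh n x hx]
    ext z
    simp only [Set.mem_inter_iff, Set.mem_union, Set.mem_singleton_iff, Set.mem_Iio]
    constructor
    · rintro ⟨hz, hzx⟩; exact ⟨Or.inl hz, hzx⟩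
    · rintro ⟨hz | hz, hzx⟩
      · exact ⟨hz, hzx⟩
      · exfalso; rw [hz] at hzx; exact absurd (lt_trans hzx (IA.lt n x hx)) (lt_irrefl A)
  · rw [Set.mem_singleton_iff] at hx; subst hx
    ext z
    simp only [Set.mem_inter_iff, Set.mem_union, Set.mem_singleton_iff, Set.mem_Iio]
    constructor
    · intro hz; exact ⟨Or.inl hz, IA.lt n z hz⟩
    · rintro ⟨hz | hz, hzx⟩
      · exact hz
      · exact absurd hzx (by rw [hz]; exact lt_irrefl x)

lemma helper_abd (IA : Inv a A) (hEq : FF a β n = FF a A n ∪ {A})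
    (habd : ∀ j ∈ a A, n ≤ j → j ∈ a β) :
    ∀ x, x ∈ FF a β n → ∀ k ∈ a x, n ≤ k → k ∈ a β := by
  intro x hx k hk hnk
  rw [hEq] at hx
  rcases hx with hx | hx
  · exact habd k (IA.abd n x hx k hk hnk) hnk
  · rw [Set.mem_singleton_iff] at hx; subst hx; exact habd k hk hnk

lemma helper_lim (IA : Inv a A) (hEq : FF a β n = FF a A n ∪ {A})
    (hAc : succO A = β ∨ ¬Order.IsSuccLimit (A.1)) :
    ∀ x, x ∈ FF a β n → Order.IsSuccLimit (x.1) → succO x = β ∨ succO x ∈ FF a β n := by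
  intro x hx hlim
  rw [hEq] at hx
  rcases hx with hx | hx
  · rcases IA.lim n x hx hlim with h1 | h1
    · right; rw [hEq, h1]; exact Or.inr rfl
    · right; rw [hEq]; exact Or.inl h1
  · rw [Set.mem_singleton_iff] at hx; subst hx
    rcases hAc with h1 | h1
    · exact Or.inl h1
    · exact absurd hlim h1

end Helpers

lemma FF_zero {β : Omega1} (h0 : β.1 = 0) : ∀ n, FF a β n = ∅ := by
  intro n
  rw [FF_eq]
  unfold step
  rw [dif_neg, dif_neg]
  · rw [h0]; exact Ordinal.not_isSuccLimit_zero
  · rintro ⟨α, -, hα⟩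
    rw [h0, Ordinal.add_one_eq_succ] at hα
    exact Order.succ_ne_bot _ hα.symm

lemma FF_succ {β : Omega1} (hsucc : ∃ α : Omega1, α < β ∧ β.1 = α.1 + 1) :
    ∀ n, FF a β n = if bnd a hsucc.choose β ≤ n then
      FF a hsucc.choose n ∪ {hsucc.choose} else ∅ := by
  intro n
  rw [FF_eq]
  unfold step
  rw [dif_pos hsucc]

lemma not_succ_of_limit {β : Omega1} (hβ : Order.IsSuccLimit (β.1)) :
    ¬ ∃ α : Omega1, α < β ∧ β.1 = α.1 + 1 := by
  rintro ⟨α, hαβ, hα⟩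
  have h1 : α.1 < β.1 := ltO.mp hαβ
  have h2 := hβ.succ_lt h1
  rw [← Ordinal.add_one_eq_succ, ← hα] at h2
  exact lt_irrefl _ h2

lemma FF_limit {β : Omega1} (hβ : Order.IsSuccLimit (β.1)) :
    ∀ n, FF a β n = if (cc a β hβ 0).2 ≤ n then
      FF a (cc a β hβ (Nat.findGreatest (fun k => (cc a β hβ k).2 ≤ n) n)).1.1 n ∪
        {(cc a β hβ (Nat.findGreatest (fun k => (cc a β hβ k).2 ≤ n) n)).1.1}
    else ∅ := by
  intro n
  rw [FF_eq]
  unfold step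
  rw [dif_neg (not_succ_of_limit hβ), dif_pos hβ]
  rfl


/-- The next chain element chosen at a limit. -/
noncomputable def qq (β : Omega1) (hβ : Order.IsSuccLimit (β.1)) (k : ℕ) : SubB β :=
  (next_exists hβ (cc a β hβ k).1.2.1 ((exists_enum β hβ).choose_spec.1 k)).choose

lemma qq_spec (β : Omega1) (hβ : Order.IsSuccLimit (β.1)) (k : ℕ) :
    (cc a β hβ k).1.1 < (qq a β hβ k).1 ∧ (exists_enum β hβ).choose k < (qq a β hβ k).1 :=
  (next_exists hβ (cc a β hβ k).1.2.1 ((exists_enum β hβ).choose_spec.1 k)).choose_spec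

lemma cc_succ (β : Omega1) (hβ : Order.IsSuccLimit (β.1)) (k : ℕ) :
    cc a β hβ (k+1) = (qq a β hβ k,
      if h : ∃ m, (cc a β hβ k).2 < m ∧ (cc a β hβ k).1.1 ∈ FF a (qq a β hβ k).1 m ∧
          (∀ j ∈ a (qq a β hβ k).1, m ≤ j → j ∈ a β)
        then h.choose else (cc a β hβ k).2 + 1) := rfl

lemma cc_zero (β : Omega1) (hβ : Order.IsSuccLimit (β.1)) :
    cc a β hβ 0 = (⟨oneO, oneO_lt hβ, oneO_succ⟩, bnd a oneO β) := rfl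

lemma cc_main {β : Omega1} (hβ : Order.IsSuccLimit (β.1))
    (htower : ∀ ξ η : Omega1, ξ < η → (a ξ \ a η).Finite ∧ (a η \ a ξ).Infinite)
    (hIH : ∀ γ : Omega1, γ < β → Inv a γ) (k : ℕ) :
    (cc a β hβ k).2 < (cc a β hβ (k+1)).2 ∧
    (cc a β hβ k).1.1 ∈ FF a (cc a β hβ (k+1)).1.1 ((cc a β hβ (k+1)).2) ∧
    (∀ j ∈ a (cc a β hβ (k+1)).1.1, (cc a β hβ (k+1)).2 ≤ j → j ∈ a β) := by
  have hq := qq_spec a β hβ k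
  have hcond : ∃ m, (cc a β hβ k).2 < m ∧ (cc a β hβ k).1.1 ∈ FF a (qq a β hβ k).1 m ∧
      (∀ j ∈ a (qq a β hβ k).1, m ≤ j → j ∈ a β) := by
    obtain ⟨n₁, hn₁⟩ := (hIH (qq a β hβ k).1 (qq a β hβ k).2.1).cover (cc a β hβ k).1.1 hq.1
    obtain ⟨m₂, hm₂⟩ := exists_bound a htower (qq a β hβ k).2.1
    refine ⟨max ((cc a β hβ k).2 + 1) (max n₁ m₂), ?_, ?_, ?_⟩
    · exact lt_of_lt_of_le (Nat.lt_succ_self _) (le_max_left _ _)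
    · exact (hIH (qq a β hβ k).1 (qq a β hβ k).2.1).mono
        (le_trans (le_max_left n₁ m₂) (le_max_right _ _)) hn₁
    · intro j hj hmj
      exact hm₂ j hj (le_trans (le_trans (le_max_right n₁ m₂) (le_max_right _ _)) hmj)
  rw [cc_succ]
  exact dif_pos hcond ▸ ⟨hcond.choose_spec.1, hcond.choose_spec.2.1, hcond.choose_spec.2.2⟩


variable {β : Omega1}

lemma cc_fst_lt (hβ : Order.IsSuccLimit (β.1)) (k : ℕ) :
    (cc a β hβ k).1.1 < (cc a β hβ (k+1)).1.1 := by
  rw [cc_succ]; exact (qq_spec a β hβ k).1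

lemma cc_s_lt (hβ : Order.IsSuccLimit (β.1)) (k : ℕ) :
    (exists_enum β hβ).choose k < (cc a β hβ (k+1)).1.1 := by
  rw [cc_succ]; exact (qq_spec a β hβ k).2

lemma cc_k_le (hβ : Order.IsSuccLimit (β.1))
    (htower : ∀ ξ η : Omega1, ξ < η → (a ξ \ a η).Finite ∧ (a η \ a ξ).Infinite)
    (hIH : ∀ γ : Omega1, γ < β → Inv a γ) (k : ℕ) : k ≤ (cc a β hβ k).2 := by
  induction k with
  | zero => exact Nat.zero_le _
  | succ k IHk => have := (cc_main a hβ htower hIH k).1; omega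

lemma cc_snd_le (hβ : Order.IsSuccLimit (β.1))
    (htower : ∀ ξ η : Omega1, ξ < η → (a ξ \ a η).Finite ∧ (a η \ a ξ).Infinite)
    (hIH : ∀ γ : Omega1, γ < β → Inv a γ) {j k : ℕ} (h : j ≤ k) : (cc a β hβ j).2 ≤ (cc a β hβ k).2 := by
  induction h with
  | refl => exact le_rfl
  | @step m hm IHm => exact le_trans IHm (le_of_lt (cc_main a hβ htower hIH m).1)

lemma cc_chain (hβ : Order.IsSuccLimit (β.1))
    (htower : ∀ ξ η : Omega1, ξ < η → (a ξ \ a η).Finite ∧ (a η \ a ξ).Infinite)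
    (hIH : ∀ γ : Omega1, γ < β → Inv a γ) : ∀ k j n, j < k → (cc a β hβ k).2 ≤ n →
    (cc a β hβ j).1.1 ∈ FF a (cc a β hβ k).1.1 n := by
  intro k
  induction k with
  | zero => intro j n hj _; exact absurd hj (Nat.not_lt_zero j)
  | succ k IHk =>
    intro j n hj hn
    have hmain := cc_main a hβ htower hIH k
    have hbase : (cc a β hβ k).1.1 ∈ FF a (cc a β hβ (k+1)).1.1 n :=
      (hIH _ (cc a β hβ (k+1)).1.2.1).mono hn hmain.2.1
    rcases Nat.lt_succ_iff_lt_or_eq.mp hj with hj' | hj'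
    · have hkn : (cc a β hβ k).2 ≤ n := le_trans (le_of_lt hmain.1) hn
      have h1 := IHk j n hj' hkn
      have hcoh := (hIH _ (cc a β hβ (k+1)).1.2.1).coh n _ hbase
      rw [hcoh] at h1
      exact h1.1
    · subst hj'; exact hbase

lemma cc_abd' (hβ : Order.IsSuccLimit (β.1))
    (htower : ∀ ξ η : Omega1, ξ < η → (a ξ \ a η).Finite ∧ (a η \ a ξ).Infinite)
    (hIH : ∀ γ : Omega1, γ < β → Inv a γ) : ∀ k, ∀ j ∈ a (cc a β hβ k).1.1, (cc a β hβ k).2 ≤ j → j ∈ a β := by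
  intro k
  cases k with
  | zero => rw [cc_zero]; exact bnd_spec a htower (oneO_lt hβ)
  | succ k => exact (cc_main a hβ htower hIH k).2.2


lemma inv_all
    (htower : ∀ ξ η : Omega1, ξ < η → (a ξ \ a η).Finite ∧ (a η \ a ξ).Infinite) :
    ∀ β : Omega1, Inv a β := by
  intro β
  refine (wellFounded_lt (α := Omega1)).induction β ?_
  intro β IH
  rcases Ordinal.zero_or_succ_or_isSuccLimit β.1 with h0 | ⟨x, hx⟩ | hlim
  · -- zero case
    have hF := FF_zero a h0
    refine ⟨?_, ?_, ?_, ?_, ?_, ?_, ?_⟩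
    · intro n γ hγ; rw [hF n] at hγ; exact absurd hγ (Set.notMem_empty γ)
    · intro m n _ x hx; rw [hF m] at hx; exact absurd hx (Set.notMem_empty x)
    · intro n; rw [hF n]; exact Set.finite_empty
    · intro γ hγ
      exfalso
      have h1 := ltO.mp hγ
      rw [h0] at h1
      exact not_lt_zero' h1
    · intro n α hα; rw [hF n] at hα; exact absurd hα (Set.notMem_empty α)
    · intro n α hα; rw [hF n] at hα; exact absurd hα (Set.notMem_empty α)
    · intro n α hα; rw [hF n] at hα; exact absurd hα (Set.notMem_empty α)
  · -- successor case
    have hxβ : x < β.1 := by rw [← hx]; exact Order.lt_succ x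
    have hxΩ : x ∈ Set.Iio (Cardinal.aleph 1).ord := Set.mem_Iio.mpr (lt_trans hxβ β.2)
    have hsucc : ∃ α : Omega1, α < β ∧ β.1 = α.1 + 1 :=
      ⟨⟨x, hxΩ⟩, ltO.mpr hxβ, by rw [← hx, Ordinal.add_one_eq_succ]⟩
    have IA := IH hsucc.choose hsucc.choose_spec.1
    have hF := FF_succ a hsucc
    have habd : ∀ j ∈ a hsucc.choose, bnd a hsucc.choose β ≤ j → j ∈ a β :=
      bnd_spec a htower hsucc.choose_spec.1
    have hEq : ∀ n, bnd a hsucc.choose β ≤ n →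
        FF a β n = FF a hsucc.choose n ∪ {hsucc.choose} := by
      intro n hn; rw [hF n, if_pos hn]
    have hEmp : ∀ n, ¬ bnd a hsucc.choose β ≤ n → FF a β n = ∅ := by
      intro n hn; rw [hF n, if_neg hn]
    refine ⟨?_, ?_, ?_, ?_, ?_, ?_, ?_⟩
    · intro n γ hγ
      by_cases hn : bnd a hsucc.choose β ≤ n
      · exact helper_lt hsucc.choose_spec.1 IA (hEq n hn) γ hγ
      · rw [hEmp n hn] at hγ; exact absurd hγ (Set.notMem_empty γ)
    · intro m n hmn x hx
      by_cases hm : bnd a hsucc.choose β ≤ m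
      · have hn : bnd a hsucc.choose β ≤ n := le_trans hm hmn
        rw [hEq m hm] at hx
        rw [hEq n hn]
        rcases hx with hx | hx
        · exact Or.inl (IA.mono hmn hx)
        · exact Or.inr hx
      · rw [hEmp m hm] at hx; exact absurd hx (Set.notMem_empty x)
    · intro n
      by_cases hn : bnd a hsucc.choose β ≤ n
      · rw [hEq n hn]; exact (IA.fin n).union (Set.finite_singleton _)
      · rw [hEmp n hn]; exact Set.finite_empty
    · intro γ hγ
      have h1 : γ.1 < hsucc.choose.1 + 1 := by
        rw [← hsucc.choose_spec.2]; exact ltO.mp hγ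
      rw [Ordinal.add_one_eq_succ] at h1
      rcases eq_or_lt_of_le (Order.lt_succ_iff.mp h1) with h3 | h3
      · refine ⟨bnd a hsucc.choose β, ?_⟩
        rw [hEq _ le_rfl]
        exact Or.inr (extO h3)
      · obtain ⟨n₀, hn₀⟩ := IA.cover γ (ltO.mpr h3)
        refine ⟨max (bnd a hsucc.choose β) n₀, ?_⟩
        rw [hEq _ (le_max_left _ _)]
        exact Or.inl (IA.mono (le_max_right _ _) hn₀)
    · intro n α hα
      by_cases hn : bnd a hsucc.choose β ≤ n
      · exact helper_coh IA (hEq n hn) α hα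
      · rw [hEmp n hn] at hα; exact absurd hα (Set.notMem_empty α)
    · intro n α hα
      by_cases hn : bnd a hsucc.choose β ≤ n
      · exact helper_abd IA (hEq n hn)
          (fun j hj hnj => habd j hj (le_trans hn hnj)) α hα
      · rw [hEmp n hn] at hα; exact absurd hα (Set.notMem_empty α)
    · intro n α hα hl
      by_cases hn : bnd a hsucc.choose β ≤ n
      · exact helper_lim IA (hEq n hn)
          (Or.inl (extO (by rw [succO_val, ← hsucc.choose_spec.2]))) α hα hl
      · rw [hEmp n hn] at hα; exact absurd hα (Set.notMem_empty α)
  · -- limit case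
    have hF := FF_limit a hlim
    set K : ℕ → ℕ := fun n => Nat.findGreatest (fun k => (cc a β hlim k).2 ≤ n) n with hKdef
    have hkle := cc_k_le a hlim htower IH
    have hspec : ∀ n, (cc a β hlim 0).2 ≤ n → (cc a β hlim (K n)).2 ≤ n := by
      intro n hn
      exact Nat.findGreatest_spec (P := fun k => (cc a β hlim k).2 ≤ n) (Nat.zero_le n) hn
    have hle : ∀ n k, (cc a β hlim k).2 ≤ n → k ≤ K n := by
      intro n k h
      exact Nat.le_findGreatest (P := fun k => (cc a β hlim k).2 ≤ n) (le_trans (hkle k) h) h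
    have hchain := cc_chain a hlim htower IH
    have habd := cc_abd' a hlim htower IH
    have hEq : ∀ n, (cc a β hlim 0).2 ≤ n →
        FF a β n = FF a (cc a β hlim (K n)).1.1 n ∪ {(cc a β hlim (K n)).1.1} := by
      intro n hn; rw [hF n, if_pos hn]
    have hEmp : ∀ n, ¬ (cc a β hlim 0).2 ≤ n → FF a β n = ∅ := by
      intro n hn; rw [hF n, if_neg hn]
    have hsub : ∀ n j k, j ≤ k → (cc a β hlim k).2 ≤ n →
        FF a (cc a β hlim j).1.1 n ∪ {(cc a β hlim j).1.1} ⊆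
        FF a (cc a β hlim k).1.1 n ∪ {(cc a β hlim k).1.1} := by
      intro n j k hjk hkn x hx
      rcases eq_or_lt_of_le hjk with rfl | h
      · exact hx
      · have hmem : (cc a β hlim j).1.1 ∈ FF a (cc a β hlim k).1.1 n := hchain k j n h hkn
        rcases hx with hx | hx
        · left
          have hcoh := (IH _ (cc a β hlim k).1.2.1).coh n _ hmem
          rw [hcoh] at hx
          exact hx.1
        · left
          rw [Set.mem_singleton_iff] at hx
          rw [hx]
          exact hmem
    refine ⟨?_, ?_, ?_, ?_, ?_, ?_, ?_⟩
    · intro n γ hγ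
      by_cases hn : (cc a β hlim 0).2 ≤ n
      · exact helper_lt (cc a β hlim (K n)).1.2.1 (IH _ (cc a β hlim (K n)).1.2.1)
          (hEq n hn) γ hγ
      · rw [hEmp n hn] at hγ; exact absurd hγ (Set.notMem_empty γ)
    · intro m n hmn x hx
      by_cases h0m : (cc a β hlim 0).2 ≤ m
      · have h0n : (cc a β hlim 0).2 ≤ n := le_trans h0m hmn
        rw [hEq m h0m] at hx
        rw [hEq n h0n]
        have hjk : K m ≤ K n := hle n (K m) (le_trans (hspec m h0m) hmn)
        have hx' : x ∈ FF a (cc a β hlim (K m)).1.1 n ∪ {(cc a β hlim (K m)).1.1} := by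
          rcases hx with hx | hx
          · exact Or.inl ((IH _ (cc a β hlim (K m)).1.2.1).mono hmn hx)
          · exact Or.inr hx
        exact hsub n (K m) (K n) hjk (hspec n h0n) hx'
      · rw [hEmp m h0m] at hx; exact absurd hx (Set.notMem_empty x)
    · intro n
      by_cases hn : (cc a β hlim 0).2 ≤ n
      · rw [hEq n hn]
        exact ((IH _ (cc a β hlim (K n)).1.2.1).fin n).union (Set.finite_singleton _)
      · rw [hEmp n hn]; exact Set.finite_empty
    · intro γ hγ
      obtain ⟨k, hk⟩ := (exists_enum β hlim).choose_spec.2 γ hγ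
      have hγk : γ < (cc a β hlim (k+1)).1.1 := hk ▸ cc_s_lt a hlim k
      obtain ⟨n₁, hn₁⟩ := (IH _ (cc a β hlim (k+1)).1.2.1).cover γ hγk
      refine ⟨max n₁ (cc a β hlim (k+1)).2, ?_⟩
      have h0n : (cc a β hlim 0).2 ≤ max n₁ (cc a β hlim (k+1)).2 :=
        le_trans (cc_snd_le a hlim htower IH (Nat.zero_le (k+1))) (le_max_right _ _)
      rw [hEq _ h0n]
      apply hsub _ (k+1) (K _) (hle _ (k+1) (le_max_right _ _)) (hspec _ h0n)
      exact Or.inl ((IH _ (cc a β hlim (k+1)).1.2.1).mono (le_max_left _ _) hn₁)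
    · intro n α hα
      by_cases hn : (cc a β hlim 0).2 ≤ n
      · exact helper_coh (IH _ (cc a β hlim (K n)).1.2.1) (hEq n hn) α hα
      · rw [hEmp n hn] at hα; exact absurd hα (Set.notMem_empty α)
    · intro n α hα
      by_cases hn : (cc a β hlim 0).2 ≤ n
      · exact helper_abd (IH _ (cc a β hlim (K n)).1.2.1) (hEq n hn)
          (fun j hj hnj => habd (K n) j hj (le_trans (hspec n hn) hnj)) α hα
      · rw [hEmp n hn] at hα; exact absurd hα (Set.notMem_empty α)
    · intro n α hα hl
      by_cases hn : (cc a β hlim 0).2 ≤ n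
      · refine helper_lim (IH _ (cc a β hlim (K n)).1.2.1) (hEq n hn) (Or.inr ?_) α hα hl
        obtain ⟨δ, hδ⟩ := (cc a β hlim (K n)).1.2.2
        rw [hδ, Ordinal.add_one_eq_succ]
        exact Order.not_isSuccLimit_succ _
      · rw [hEmp n hn] at hα; exact absurd hα (Set.notMem_empty α)

end
end TreeAux

theorem exists_tree_orderings
    (a : Omega1 → Set ℕ)
    (hinf : ∀ ξ, (a ξ).Infinite)
    (htower : ∀ ξ η : Omega1, ξ < η → (a ξ \ a η).Finite ∧ (a η \ a ξ).Infinite) :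
    ∃ r : ℕ → Omega1 → Omega1 → Prop,
      (∀ n, (∀ α, ¬ r n α α) ∧
        (∀ α β γ, r n α β → r n β γ → r n α γ) ∧
        (∀ β, {γ | r n γ β}.Finite) ∧
        (∀ β γ γ', r n γ β → r n γ' β → γ = γ' ∨ r n γ γ' ∨ r n γ' γ)) ∧
      (∀ m n α β, m < n → r m α β → r n α β) ∧
      (∀ α β : Omega1, α < β → ∃ n, r n α β) ∧
      (∀ n α β, r n α β → ∀ k ∈ a α, n ≤ k → k ∈ a β) ∧
      (∀ n α β, Order.IsSuccLimit α.1 → r n α β →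
        ∀ α' : Omega1, α'.1 = α.1 + 1 → (α' = β ∨ r n α' β)) := by
  have Hinv := TreeAux.inv_all a htower
  refine ⟨fun n x y => x ∈ TreeAux.FF a y n, ?_, ?_, ?_, ?_, ?_⟩
  · intro n
    refine ⟨?_, ?_, ?_, ?_⟩
    · intro α h
      exact absurd ((Hinv α).lt n α h) (lt_irrefl α)
    · intro α β γ h1 h2
      have hc := (Hinv γ).coh n β h2
      rw [hc] at h1
      exact h1.1
    · intro β
      exact (Hinv β).fin n
    · intro β γ γ' h1 h2
      rcases lt_trichotomy γ γ' with h | h | h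
      · right; left
        have hc := (Hinv β).coh n γ' h2
        show γ ∈ TreeAux.FF a γ' n
        rw [hc]
        exact ⟨h1, h⟩
      · left; exact h
      · right; right
        have hc := (Hinv β).coh n γ h1
        show γ' ∈ TreeAux.FF a γ n
        rw [hc]
        exact ⟨h2, h⟩
  · intro m n α β hmn h
    exact (Hinv β).mono (le_of_lt hmn) h
  · intro α β h
    exact (Hinv β).cover α h
  · intro n α β h k hk hnk
    exact (Hinv β).abd n α h k hk hnk
  · intro n α β hl h α' hα'
    have hα'' : α' = TreeAux.succO α := TreeAux.extO (by rw [hα', TreeAux.succO_val])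
    rcases (Hinv β).lim n α h hl with h1 | h1
    · left; rw [hα'']; exact h1
    · right; rw [hα'']; exact h1
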